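/- Suppose X is invertible, every λ ∈ ℂ with D¹_N(λ) = 0 satisfies Re λ > 0, and for every eigenvalue λ of W = X⁻¹Y one has n_j − λ r_j ≠ 0 for all j = 1,…,N−1. Then I + (1/2)W is invertible and every eigenvalue μ of (I + (1/2)W)⁻¹(I − (1/2)W) satisfies |μ| < 1; that is, the amplification matrix of the Crank–Nicolson compact scheme has spectral radius less than 1, so the scheme is stable. -/

import Mathlib

/-- Labels `a`, `b`, `c` for the sequences in the collection `𝒜_N`. -/
inductive Label where
  | a : Label
  | b : Label
  | c : Label
deriving DecidableEq

instance : Fintype Label :=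
  ⟨{Label.a, Label.b, Label.c}, fun x => by cases x <;> simp⟩

/-- Admissibility of a label sequence (with `n = N - 1` labels, index `i` standing
for `j = i + 1`): the last label is not `a` and, for `2 ≤ j ≤ N-1`, `t_j = c` implies
`t_{j-1} = a` while `t_j ∈ {a,b}` implies `t_{j-1} ∈ {b,c}`. -/
def Admissible {n : ℕ} (t : Fin n → Label) : Prop :=
  (∀ h : 0 < n, t ⟨n - 1, by omega⟩ ≠ Label.a) ∧
  ∀ j : ℕ, ∀ h : j + 1 < n,
    (t ⟨j + 1, h⟩ = Label.c → t ⟨j, by omega⟩ = Label.a) ∧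
    (t ⟨j + 1, h⟩ ≠ Label.c → t ⟨j, by omega⟩ ≠ Label.a)

/-- The collection `𝒜_N` (with `n = N - 1` labels per sequence). -/
noncomputable def AdmSet (n : ℕ) : Finset (Fin n → Label) :=
  haveI := Classical.decPred (Admissible (n := n))
  Finset.univ.filter Admissible

/-- The value `v_j(t)`: `A_j` if `t_j = a`, `-B_j` if `t_j = b`, `-C_j` if `t_j = c`. -/
def labelVal {n : ℕ} (A B C : ℕ → ℂ) (t : Fin n → Label) (j : Fin n) : ℂ :=
  match t j with
  | Label.a => A (j.val + 1)
  | Label.b => -B (j.val + 1)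
  | Label.c => -C (j.val + 1)

/-- `D¹_N = Σ_{t ∈ 𝒜_N, t_1 ≠ c} ∏_{j=1}^{N-1} v_j(t)`, with `n = N - 1`. -/
noncomputable def D1 (n : ℕ) (A B C : ℕ → ℂ) : ℂ :=
  haveI : DecidablePred fun t : Fin n → Label => ∀ h : 0 < n, t ⟨0, h⟩ ≠ Label.c :=
    Classical.decPred _
  ∑ t ∈ (AdmSet n).filter (fun t => ∀ h : 0 < n, t ⟨0, h⟩ ≠ Label.c),
    ∏ j, labelVal A B C t j

/-- The `(N-1)×(N-1)` tridiagonal complex matrix with 1-indexed subdiagonal entries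
`sub_{i+1}` (at position `(i+1, i)`), diagonal entries `dia_i` and superdiagonal
entries `sup_i` (at position `(i, i+1)`), built from real data. -/
def triMatC (n : ℕ) (sub dia sup : ℕ → ℝ) : Matrix (Fin n) (Fin n) ℂ :=
  Matrix.of fun i j =>
    if i.val = j.val then (dia (i.val + 1) : ℂ)
    else if i.val + 1 = j.val then (sup (i.val + 1) : ℂ)
    else if j.val + 1 = i.val then (sub (i.val + 1) : ℂ)
    else 0

/-- `μ` is an eigenvalue of the square complex matrix `M` if `M v = μ v` for some
nonzero vector `v`. -/
def IsEig {n : ℕ} (M : Matrix (Fin n) (Fin n) ℂ) (μ : ℂ) : Prop :=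
  ∃ v : Fin n → ℂ, v ≠ 0 ∧ M.mulVec v = μ • v

/-! ### Auxiliary development -/

section Aux

open Classical

/-- Fully complex tridiagonal matrix. -/
def triC (n : ℕ) (sub dia sup : ℕ → ℂ) : Matrix (Fin n) (Fin n) ℂ :=
  Matrix.of fun i j =>
    if i.val = j.val then dia (i.val + 1)
    else if i.val + 1 = j.val then sup (i.val + 1)
    else if j.val + 1 = i.val then sub (i.val + 1)
    else 0

/-- Recursively defined tridiagonal "determinant" polynomial matching `D1`. -/
def dd : ℕ → (ℕ → ℂ) → (ℕ → ℂ) → (ℕ → ℂ) → ℂ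
  | 0, _, _, _ => 1
  | 1, _, B, _ => -B 1
  | (n+2), A, B, C =>
      -B 1 * dd (n+1) (fun k => A (k+1)) (fun k => B (k+1)) (fun k => C (k+1))
      - A 1 * C 2 * dd n (fun k => A (k+2)) (fun k => B (k+2)) (fun k => C (k+2))

lemma triC_apply (n : ℕ) (sub dia sup : ℕ → ℂ) (i j : Fin n) :
    triC n sub dia sup i j =
      if i.val = j.val then dia (i.val + 1)
      else if i.val + 1 = j.val then sup (i.val + 1)
      else if j.val + 1 = i.val then sub (i.val + 1)
      else 0 := rfl

lemma triC_entry_eq (n : ℕ) (sub dia sup : ℕ → ℂ) (i j : Fin n) (a b : ℕ)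
    (hi : i.val = a) (hj : j.val = b) :
    triC n sub dia sup i j =
      (if a = b then dia (a + 1)
      else if a + 1 = b then sup (a + 1)
      else if b + 1 = a then sub (a + 1)
      else 0) := by
  rw [triC_apply, hi, hj]

lemma triC_sub_succ (n : ℕ) (sub dia sup : ℕ → ℂ) :
    (triC (n+1) sub dia sup).submatrix Fin.succ Fin.succ
      = triC n (fun k => sub (k+1)) (fun k => dia (k+1)) (fun k => sup (k+1)) := by
  ext i j
  rw [Matrix.submatrix_apply,
    triC_entry_eq (n+1) sub dia sup i.succ j.succ (i.val+1) (j.val+1) (Fin.val_succ i)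
      (Fin.val_succ j), triC_apply]
  simp only [add_left_inj]

lemma triC_det_rec (n : ℕ) (sub dia sup : ℕ → ℂ) :
    (triC (n+2) sub dia sup).det
      = dia 1 * (triC (n+1) (fun k => sub (k+1)) (fun k => dia (k+1)) (fun k => sup (k+1))).det
        - sup 1 * sub 2 *
          (triC n (fun k => sub (k+2)) (fun k => dia (k+2)) (fun k => sup (k+2))).det := by
  rw [Matrix.det_succ_row_zero]
  rw [Fin.sum_univ_succ, Fin.sum_univ_succ]
  have hz : ∀ j : Fin n, (triC (n+2) sub dia sup) 0 j.succ.succ = 0 := by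
    intro j
    rw [triC_entry_eq (n+2) sub dia sup 0 j.succ.succ 0 (j.val+2) rfl (by simp [Fin.val_succ])]
    split_ifs <;> first | rfl | (exfalso; first | assumption | omega)
  simp only [hz, mul_zero, zero_mul, mul_zero, Finset.sum_const_zero, add_zero]
  have e00 : (triC (n+2) sub dia sup) 0 0 = dia 1 := by
    rw [triC_entry_eq (n+2) sub dia sup 0 0 0 0 rfl rfl]; simp
  have e01 : (triC (n+2) sub dia sup) 0 (Fin.succ 0) = sup 1 := by
    rw [triC_entry_eq (n+2) sub dia sup 0 (Fin.succ 0) 0 1 rfl (by simp)]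
    norm_num
  have m0 : (triC (n+2) sub dia sup).submatrix Fin.succ (Fin.succAbove 0)
      = triC (n+1) (fun k => sub (k+1)) (fun k => dia (k+1)) (fun k => sup (k+1)) := by
    rw [Fin.succAbove_zero, triC_sub_succ]
  have hc : ∀ j : Fin (n+1), (((Fin.succ 0 : Fin (n+2))).succAbove j).val
      = if j.val = 0 then 0 else j.val + 1 := by
    intro j
    rcases Nat.eq_zero_or_pos j.val with h | h
    · rw [if_pos h]
      have : j = 0 := Fin.ext h
      subst this
      rfl
    · rw [if_neg (by omega)]
      have : (Fin.succ 0 : Fin (n+2)) ≤ j.castSucc := by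
        simp [Fin.le_def, Fin.val_succ]; omega
      rw [Fin.succAbove_of_le_castSucc _ _ this, Fin.val_succ]
  have m1 : ((triC (n+2) sub dia sup).submatrix Fin.succ (Fin.succ 0).succAbove).det
      = sub 2 * (triC n (fun k => sub (k+2)) (fun k => dia (k+2)) (fun k => sup (k+2))).det := by
    rw [Matrix.det_succ_column_zero, Fin.sum_univ_succ]
    have hz2 : ∀ i : Fin n,
        ((triC (n+2) sub dia sup).submatrix Fin.succ (Fin.succ 0).succAbove) i.succ 0 = 0 := by
      intro i
      rw [Matrix.submatrix_apply,
        triC_entry_eq (n+2) sub dia sup _ _ (i.val+2) 0 (by simp [Fin.val_succ])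
          (by rw [hc]; simp)]
      split_ifs <;> first | rfl | (exfalso; first | assumption | omega)
    simp only [hz2, mul_zero, zero_mul, Finset.sum_const_zero, add_zero]
    have e10 : ((triC (n+2) sub dia sup).submatrix Fin.succ (Fin.succ 0).succAbove) 0 0
        = sub 2 := by
      rw [Matrix.submatrix_apply,
        triC_entry_eq (n+2) sub dia sup _ _ 1 0 (by simp) (by rw [hc]; simp)]
      norm_num
    have m2 : ((triC (n+2) sub dia sup).submatrix Fin.succ (Fin.succ 0).succAbove).submatrix
          (Fin.succAbove 0) Fin.succ
        = triC n (fun k => sub (k+2)) (fun k => dia (k+2)) (fun k => sup (k+2)) := by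
      ext i j
      rw [Matrix.submatrix_apply, Matrix.submatrix_apply,
        triC_entry_eq (n+2) sub dia sup _ _ (i.val+2) (j.val+2)
          (by rw [Fin.succAbove_zero]; simp [Fin.val_succ])
          (by rw [hc]; simp [Fin.val_succ]),
        triC_apply]
      split_ifs <;> first | rfl | (exfalso; first | assumption | omega) | (congr 1; omega)
    rw [e10, m2]
    simp
  rw [e00, e01, m0, m1]
  simp [Fin.val_succ]
  ring

lemma det_eq_dd : ∀ (n : ℕ) (A B C : ℕ → ℂ),
    (triC n C B A).det = (-1)^n * dd n A B C
  | 0, A, B, C => by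
      simp [dd, Matrix.det_fin_zero]
  | 1, A, B, C => by
      rw [Matrix.det_fin_one]
      rw [triC_entry_eq 1 C B A 0 0 0 0 rfl rfl]
      simp [dd]
  | (n+2), A, B, C => by
      rw [triC_det_rec, det_eq_dd (n+1), det_eq_dd n]
      show _ = (-1)^(n+2) * (-B 1 * dd (n+1) _ _ _ - A 1 * C 2 * dd n _ _ _)
      ring

/-- The summand of `D1` as a function. -/
noncomputable def G {n : ℕ} (A B C : ℕ → ℂ) (t : Fin n → Label) : ℂ :=
  if Admissible t ∧ ∀ h : 0 < n, t ⟨0, h⟩ ≠ Label.c then ∏ j, labelVal A B C t j else 0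

/-- The analogous summand with the condition `t 0 = c`. -/
noncomputable def Gc {n : ℕ} (A B C : ℕ → ℂ) (t : Fin (n+1) → Label) : ℂ :=
  if Admissible t ∧ t ⟨0, Nat.succ_pos n⟩ = Label.c then ∏ j, labelVal A B C t j else 0

lemma D1_eq_sum_G (n : ℕ) (A B C : ℕ → ℂ) :
    D1 n A B C = ∑ t : Fin n → Label, G A B C t := by
  classical
  unfold D1 AdmSet G
  rw [Finset.filter_filter, Finset.sum_filter]

lemma admissible_cons {m : ℕ} (y : Label) (u : Fin m → Label) :
    Admissible (Fin.cons y u) ↔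
      Admissible u ∧
      (∀ h : 0 < m, (u ⟨0, h⟩ = Label.c → y = Label.a) ∧
        (u ⟨0, h⟩ ≠ Label.c → y ≠ Label.a)) ∧
      (m = 0 → y ≠ Label.a) := by
  cases m with
  | zero =>
      constructor
      · rintro ⟨h1, -⟩
        refine ⟨⟨fun h => absurd h (by omega), fun j h => absurd h (by omega)⟩,
          fun h => absurd h (by omega), fun _ => ?_⟩
        have h1' := h1 (Nat.succ_pos 0)
        exact h1'
      · rintro ⟨-, -, h3⟩
        have h3' := h3 rfl
        refine ⟨fun _ => ?_, fun j hj => absurd hj (by omega)⟩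
        exact h3'
  | succ m =>
      constructor
      · rintro ⟨h1, h2⟩
        refine ⟨⟨fun hm => ?_, fun j hj => ?_⟩, fun hm => ?_, fun h => absurd h (by omega)⟩
        · have h1' := h1 (Nat.succ_pos (m+1))
          exact h1'
        · have h2' := h2 (j+1) (by omega)
          exact h2'
        · have h2' := h2 0 (by omega)
          exact h2'
      · rintro ⟨⟨g1, g2⟩, g3, -⟩
        constructor
        · intro hm
          have g1' := g1 (Nat.succ_pos m)
          exact g1'
        · intro j hj
          cases j with
          | zero =>
              have g3' := g3 (Nat.succ_pos m)
              exact g3'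
          | succ k =>
              have g2' := g2 k (by omega)
              exact g2'

lemma prod_labelVal_cons {m : ℕ} (A B C : ℕ → ℂ) (y : Label) (u : Fin m → Label) :
    ∏ j, labelVal A B C (Fin.cons y u) j
      = labelVal A B C (Fin.cons y u) 0 *
        ∏ j, labelVal (fun k => A (k+1)) (fun k => B (k+1)) (fun k => C (k+1)) u j := by
  rw [Fin.prod_univ_succ]
  congr 1

lemma labelVal_cons_zero {m : ℕ} (A B C : ℕ → ℂ) (y : Label) (u : Fin m → Label) :
    labelVal A B C (Fin.cons y u) 0 =
      match y with
      | Label.a => A 1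
      | Label.b => -B 1
      | Label.c => -C 1 := by
  cases y <;> rfl

lemma G_empty {A B C : ℕ → ℂ} (u : Fin 0 → Label) : G A B C u = 1 := by
  rw [G, if_pos]
  · simp
  · exact ⟨⟨fun h => absurd h (by omega), fun j h => absurd h (by omega)⟩,
      fun h => absurd h (by omega)⟩

lemma G_cons_c {m : ℕ} (A B C : ℕ → ℂ) (u : Fin m → Label) :
    G A B C (Fin.cons Label.c u) = 0 := by
  rw [G, if_neg]
  rintro ⟨-, h2⟩
  have h2' := h2 (Nat.succ_pos m)
  exact h2' rfl

lemma G_cons_b {m : ℕ} (A B C : ℕ → ℂ) (u : Fin m → Label) :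
    G A B C (Fin.cons Label.b u)
      = -B 1 * G (fun k => A (k+1)) (fun k => B (k+1)) (fun k => C (k+1)) u := by
  unfold G
  have hiff : (Admissible (Fin.cons Label.b u) ∧
      ∀ h : 0 < m + 1, (Fin.cons Label.b u : Fin (m+1) → Label) ⟨0, h⟩ ≠ Label.c) ↔
      (Admissible u ∧ ∀ h : 0 < m, u ⟨0, h⟩ ≠ Label.c) := by
    rw [admissible_cons]
    constructor
    · rintro ⟨⟨ha, hb, -⟩, -⟩
      exact ⟨ha, fun h => fun hc => by simpa using (hb h).1 hc⟩
    · rintro ⟨ha, hb⟩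
      exact ⟨⟨ha, fun h => ⟨fun hc => absurd hc (hb h), fun _ => by simp⟩,
        fun _ => by simp⟩, fun _ => by simp⟩
  by_cases hcond : Admissible u ∧ ∀ h : 0 < m, u ⟨0, h⟩ ≠ Label.c
  · rw [if_pos (hiff.2 hcond), if_pos hcond, prod_labelVal_cons, labelVal_cons_zero]
  · rw [if_neg (fun h => hcond (hiff.1 h)), if_neg hcond, mul_zero]

lemma G_cons_a {m : ℕ} (A B C : ℕ → ℂ) (u : Fin (m+1) → Label) :
    G A B C (Fin.cons Label.a u)
      = A 1 * Gc (fun k => A (k+1)) (fun k => B (k+1)) (fun k => C (k+1)) u := by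
  unfold G Gc
  have hiff : (Admissible (Fin.cons Label.a u) ∧
      ∀ h : 0 < m + 2, (Fin.cons Label.a u : Fin (m+2) → Label) ⟨0, h⟩ ≠ Label.c) ↔
      (Admissible u ∧ u ⟨0, Nat.succ_pos m⟩ = Label.c) := by
    rw [admissible_cons]
    constructor
    · rintro ⟨⟨ha, hb, -⟩, -⟩
      refine ⟨ha, ?_⟩
      by_contra hne
      exact (hb (by omega)).2 hne rfl
    · rintro ⟨ha, hb⟩
      exact ⟨⟨ha, fun h => ⟨fun _ => rfl, fun hne => absurd hb hne⟩,
        fun h => absurd h (by omega)⟩, fun _ => by simp⟩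
  by_cases hcond : Admissible u ∧ u ⟨0, Nat.succ_pos m⟩ = Label.c
  · rw [if_pos (hiff.2 hcond), if_pos hcond, prod_labelVal_cons, labelVal_cons_zero]
  · rw [if_neg (fun h => hcond (hiff.1 h)), if_neg hcond, mul_zero]

lemma G_cons_a_zero (A B C : ℕ → ℂ) (u : Fin 0 → Label) :
    G A B C (Fin.cons Label.a u) = 0 := by
  rw [G, if_neg]
  rintro ⟨⟨h1, -⟩, -⟩
  have h1' := h1 (Nat.succ_pos 0)
  exact h1' rfl

lemma Gc_cons_ne {m : ℕ} (A B C : ℕ → ℂ) (y : Label) (hy : y ≠ Label.c)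
    (u : Fin m → Label) : Gc A B C (Fin.cons y u) = 0 := by
  rw [Gc, if_neg]
  rintro ⟨-, h2⟩
  exact hy h2

lemma Gc_cons_c {m : ℕ} (A B C : ℕ → ℂ) (u : Fin m → Label) :
    Gc A B C (Fin.cons Label.c u)
      = -C 1 * G (fun k => A (k+1)) (fun k => B (k+1)) (fun k => C (k+1)) u := by
  unfold Gc G
  have hiff : (Admissible (Fin.cons Label.c u) ∧
      (Fin.cons Label.c u : Fin (m+1) → Label) ⟨0, Nat.succ_pos m⟩ = Label.c) ↔
      (Admissible u ∧ ∀ h : 0 < m, u ⟨0, h⟩ ≠ Label.c) := by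
    rw [admissible_cons]
    constructor
    · rintro ⟨⟨ha, hb, -⟩, -⟩
      refine ⟨ha, fun h hc => by simpa using (hb h).1 hc⟩
    · rintro ⟨ha, hb⟩
      exact ⟨⟨ha, fun h => ⟨fun hc => absurd hc (hb h), fun _ => by simp⟩,
        fun _ => by simp⟩, rfl⟩
  by_cases hcond : Admissible u ∧ ∀ h : 0 < m, u ⟨0, h⟩ ≠ Label.c
  · rw [if_pos (hiff.2 hcond), if_pos hcond, prod_labelVal_cons, labelVal_cons_zero]
  · rw [if_neg (fun h => hcond (hiff.1 h)), if_neg hcond, mul_zero]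

lemma sum_label (f : Label → ℂ) : ∑ x : Label, f x = f .a + f .b + f .c := by
  rw [show (Finset.univ : Finset Label) = {Label.a, Label.b, Label.c} from rfl]
  rw [Finset.sum_insert (by decide), Finset.sum_insert (by decide), Finset.sum_singleton]
  ring

lemma sum_fun_succ {m : ℕ} (F : (Fin (m+1) → Label) → ℂ) :
    ∑ t : Fin (m+1) → Label, F t = ∑ x : Label, ∑ s : Fin m → Label, F (Fin.cons x s) :=
  calc ∑ t : Fin (m+1) → Label, F t
      = ∑ p : Label × (Fin m → Label), F (Fin.cons p.1 p.2) :=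
        (Fintype.sum_equiv (Fin.consEquiv (fun _ => Label))
          (fun p => F (Fin.cons p.1 p.2)) F (fun p => rfl)).symm
    _ = ∑ x : Label, ∑ s : Fin m → Label, F (Fin.cons x s) := by
        exact Fintype.sum_prod_type (f := fun p => F (Fin.cons p.1 p.2))

lemma D1_zero (A B C : ℕ → ℂ) : D1 0 A B C = 1 := by
  rw [D1_eq_sum_G]
  rw [Fintype.sum_unique (G A B C)]  -- unique inhabitant
  exact G_empty _

lemma D1_one (A B C : ℕ → ℂ) : D1 1 A B C = -B 1 := by
  rw [D1_eq_sum_G, sum_fun_succ, sum_label]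
  have h1 : ∀ s : Fin 0 → Label, G A B C (Fin.cons Label.a s) = 0 := G_cons_a_zero A B C
  have h2 : ∀ s : Fin 0 → Label, G A B C (Fin.cons Label.b s) = -B 1 := by
    intro s
    rw [G_cons_b, G_empty, mul_one]
  have h3 : ∀ s : Fin 0 → Label, G A B C (Fin.cons Label.c s) = 0 := G_cons_c A B C
  rw [Finset.sum_congr rfl (fun s _ => h1 s), Finset.sum_congr rfl (fun s _ => h2 s),
    Finset.sum_congr rfl (fun s _ => h3 s)]
  simp [Finset.card_univ]

lemma sum_Gc {m : ℕ} (A B C : ℕ → ℂ) :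
    ∑ s : Fin (m+1) → Label, Gc A B C s
      = -C 1 * D1 m (fun k => A (k+1)) (fun k => B (k+1)) (fun k => C (k+1)) := by
  rw [sum_fun_succ (Gc A B C), sum_label]
  rw [Finset.sum_congr rfl (fun u _ => Gc_cons_ne A B C Label.a (by simp) u),
    Finset.sum_congr rfl (fun u _ => Gc_cons_ne A B C Label.b (by simp) u),
    Finset.sum_congr rfl (fun u _ => Gc_cons_c A B C u)]
  rw [D1_eq_sum_G, Finset.sum_const_zero, ← Finset.mul_sum]
  ring

lemma D1_rec (n : ℕ) (A B C : ℕ → ℂ) :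
    D1 (n+2) A B C
      = -B 1 * D1 (n+1) (fun k => A (k+1)) (fun k => B (k+1)) (fun k => C (k+1))
        - A 1 * C 2 * D1 n (fun k => A (k+2)) (fun k => B (k+2)) (fun k => C (k+2)) := by
  rw [D1_eq_sum_G, sum_fun_succ (G A B C), sum_label]
  rw [Finset.sum_congr rfl (fun u _ => G_cons_a A B C u),
    Finset.sum_congr rfl (fun u _ => G_cons_b A B C u),
    Finset.sum_congr rfl (fun u _ => G_cons_c A B C u)]
  rw [Finset.sum_const_zero, ← Finset.mul_sum, ← Finset.mul_sum, sum_Gc,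
    ← D1_eq_sum_G]
  ring

lemma D1_eq_dd : ∀ (n : ℕ) (A B C : ℕ → ℂ), D1 n A B C = dd n A B C
  | 0, A, B, C => by rw [D1_zero]; rfl
  | 1, A, B, C => by rw [D1_one]; rfl
  | (n+2), A, B, C => by
      rw [D1_rec, D1_eq_dd (n+1), D1_eq_dd n]
      rfl

/-- `det (Y - λ X) = 0 → D1 λ = 0` combination. -/
lemma D1_eq_det (n : ℕ) (A B C : ℕ → ℂ) :
    (triC n C B A).det = (-1)^n * D1 n A B C := by
  rw [D1_eq_dd, det_eq_dd]

lemma triMatC_sub_smul (n : ℕ) (p q r l m nn : ℕ → ℝ) (lam : ℂ) :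
    triMatC n l m nn - lam • triMatC n p q r
      = triC n (fun k => (l k : ℂ) - lam * (p k : ℂ)) (fun k => (m k : ℂ) - lam * (q k : ℂ))
          (fun k => (nn k : ℂ) - lam * (r k : ℂ)) := by
  ext i j
  simp only [Matrix.sub_apply, Matrix.smul_apply, triMatC, triC, Matrix.of_apply, smul_eq_mul]
  split_ifs <;> ring

end Aux

/-- If `X` is invertible, every root of `D¹_N` has positive real part, and
`n_j - λ r_j ≠ 0` for every eigenvalue `λ` of `W = X⁻¹ Y` and every `j`, then
`I + (1/2) W` is invertible and every eigenvalue `μ` of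
`(I + (1/2) W)⁻¹ (I - (1/2) W)` satisfies `|μ| < 1`
(the Crank–Nicolson compact scheme is stable). -/
theorem stmt4 (N : ℕ) (hN : 2 ≤ N) (p q r l m n : ℕ → ℝ)
    (hX : IsUnit (triMatC (N - 1) p q r).det)
    (hroot : ∀ lam : ℂ,
      D1 (N - 1) (fun j => (n j : ℂ) - lam * (r j : ℂ))
        (fun j => (m j : ℂ) - lam * (q j : ℂ))
        (fun j => (l j : ℂ) - lam * (p j : ℂ)) = 0 → 0 < lam.re)
    (hA : ∀ lam : ℂ,
      IsEig ((triMatC (N - 1) p q r)⁻¹ * triMatC (N - 1) l m n) lam →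
      ∀ j, 1 ≤ j → j ≤ N - 1 → (n j : ℂ) - lam * (r j : ℂ) ≠ 0) :
    IsUnit (1 + (1 / 2 : ℂ) •
      ((triMatC (N - 1) p q r)⁻¹ * triMatC (N - 1) l m n)).det ∧
    ∀ μ : ℂ,
      IsEig ((1 + (1 / 2 : ℂ) • ((triMatC (N - 1) p q r)⁻¹ * triMatC (N - 1) l m n))⁻¹ *
        (1 - (1 / 2 : ℂ) • ((triMatC (N - 1) p q r)⁻¹ * triMatC (N - 1) l m n))) μ →
      ‖μ‖ < 1 := by
  set X := triMatC (N - 1) p q r with hXdef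
  set Y := triMatC (N - 1) l m n with hYdef
  set W := X⁻¹ * Y with hWdef
  -- every eigenvalue of W has positive real part
  have eig_pos : ∀ lam : ℂ, IsEig W lam → 0 < lam.re := by
    intro lam ⟨v, hv, hWv⟩
    have hXW : X * W = Y := by
      rw [hWdef, ← mul_assoc, Matrix.mul_nonsing_inv X hX, one_mul]
    have hker : (Y - lam • X).mulVec v = 0 := by
      have h1 : Y.mulVec v = lam • X.mulVec v := by
        rw [← hXW, ← Matrix.mulVec_mulVec, hWv, Matrix.mulVec_smul]
      rw [Matrix.sub_mulVec, h1, Matrix.smul_mulVec, sub_self]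
    have hdet : (Y - lam • X).det = 0 :=
      Matrix.exists_mulVec_eq_zero_iff.mp ⟨v, hv, hker⟩
    apply hroot lam
    have := triMatC_sub_smul (N-1) p q r l m n lam
    rw [← hXdef, ← hYdef] at this
    rw [this, D1_eq_det] at hdet
    have hpow : ((-1 : ℂ))^(N-1) ≠ 0 := pow_ne_zero _ (by norm_num)
    exact (mul_eq_zero.mp hdet).resolve_left hpow
  -- part 1: invertibility of I + (1/2) W
  have hP : IsUnit (1 + (1 / 2 : ℂ) • W).det := by
    rw [isUnit_iff_ne_zero]
    intro hdet
    obtain ⟨v, hv, hker⟩ := Matrix.exists_mulVec_eq_zero_iff.mpr hdet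
    have hWv : W.mulVec v = (-2 : ℂ) • v := by
      have h1 : v + (1/2 : ℂ) • W.mulVec v = 0 := by
        have := hker
        rwa [Matrix.add_mulVec, Matrix.one_mulVec, Matrix.smul_mulVec] at this
      have h2 : (1/2 : ℂ) • W.mulVec v = -v := by
        rw [eq_neg_iff_add_eq_zero, add_comm]; exact h1
      calc W.mulVec v = (2 : ℂ) • ((1/2 : ℂ) • W.mulVec v) := by
            rw [smul_smul]; norm_num
        _ = (-2 : ℂ) • v := by rw [h2, smul_neg]; module
    have := eig_pos (-2) ⟨v, hv, hWv⟩
    norm_num at this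
  refine ⟨hP, ?_⟩
  intro μ ⟨v, hv, hSv⟩
  set P := 1 + (1 / 2 : ℂ) • W with hPdef
  set Q := 1 - (1 / 2 : ℂ) • W with hQdef
  have hPS : P * (P⁻¹ * Q) = Q := by
    rw [← mul_assoc, Matrix.mul_nonsing_inv P hP, one_mul]
  have hQv : Q.mulVec v = μ • P.mulVec v := by
    rw [← hPS, ← Matrix.mulVec_mulVec, hSv, Matrix.mulVec_smul]
  -- (1-μ) v = ((1+μ)/2) • W v
  have key : (1 - μ) • v = (((1 + μ)/2) : ℂ) • W.mulVec v := by
    have hQe : Q.mulVec v = v - (1/2 : ℂ) • W.mulVec v := by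
      rw [hQdef, Matrix.sub_mulVec, Matrix.one_mulVec, Matrix.smul_mulVec]
    have hPe : P.mulVec v = v + (1/2 : ℂ) • W.mulVec v := by
      rw [hPdef, Matrix.add_mulVec, Matrix.one_mulVec, Matrix.smul_mulVec]
    rw [hQe, hPe] at hQv
    have hthis : v - (1/2 : ℂ) • W.mulVec v = μ • v + μ • ((1/2 : ℂ) • W.mulVec v) := by
      rw [hQv, smul_add]
    linear_combination (norm := module) hthis
  have hμne : 1 + μ ≠ 0 := by
    intro h0
    have h1 : (1 : ℂ) - μ ≠ 0 := by
      intro h1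
      have : (2 : ℂ) = 0 := by linear_combination h0 + h1
      norm_num at this
    have : (1 - μ) • v = 0 := by
      rw [key, show ((1 + μ)/2 : ℂ) = 0 by rw [h0]; ring, zero_smul]
    exact hv (by simpa [smul_eq_zero, h1] using this)
  set lam : ℂ := 2 * (1 - μ) / (1 + μ) with hlam
  have hWv : W.mulVec v = lam • v := by
    have hhalf : ((1 + μ)/2 : ℂ) ≠ 0 := by
      simp [div_eq_zero_iff, hμne]
    have := key.symm
    calc W.mulVec v = (((1 + μ)/2)⁻¹ : ℂ) • (((1 + μ)/2 : ℂ) • W.mulVec v) := by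
          rw [smul_smul, inv_mul_cancel₀ hhalf, one_smul]
      _ = (((1 + μ)/2)⁻¹ : ℂ) • ((1 - μ) • v) := by rw [← key]
      _ = lam • v := by
          rw [smul_smul, hlam]
          congr 1
          field_simp
  have hre := eig_pos lam ⟨v, hv, hWv⟩
  -- conclude |μ| < 1
  have hden : 0 < Complex.normSq (1 + μ) := Complex.normSq_pos.mpr hμne
  rw [hlam, Complex.div_re] at hre
  rw [← add_div] at hre
  have hnum : 0 < (2 * (1 - μ)).re * (1 + μ).re + (2 * (1 - μ)).im * (1 + μ).im := by
    by_contra hle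
    push_neg at hle
    have := div_nonpos_of_nonpos_of_nonneg hle (le_of_lt hden)
    linarith
  have hsq : Complex.normSq μ < 1 := by
    have h1 : (2 * (1 - μ)).re = 2 * (1 - μ.re) := by simp [Complex.mul_re]; try ring
    have h2 : (2 * (1 - μ)).im = -2 * μ.im := by simp [Complex.mul_im]; try ring
    have h3 : (1 + μ).re = 1 + μ.re := by simp
    have h4 : (1 + μ).im = μ.im := by simp
    rw [h1, h2, h3, h4] at hnum
    rw [Complex.normSq_apply]
    nlinarith
  have habs : (‖μ‖)^2 < 1 := by
    rw [Complex.sq_norm]; exact hsq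
  nlinarith [norm_nonneg μ, habs]
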